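/- Let M be a Wall form with r(M) ≥ g and let φ : M → P⁰ be an H-map. Then the kernel of φ (a sub-Wall form of M with components ker φ₋ and ker φ₊) satisfies r(ker φ) ≥ g − 1. Similarly, if r̄(M) ≥ g, then r̄(ker φ) ≥ g − 1. -/

import Mathlib

/-!
Framework: `H`-pairs and Wall forms, following N. Perlmutter,
"Homological stability for the moduli spaces of products of spheres".

A form parameter `(G, ∂, π, ε)` is recorded together with the two
compatibility identities `∂(ε•h) = ∂(h)` and `π(∂(h)) = h + ε•h`, which hold
in the geometric situation considered in the paper and which are exactly the
conditions needed for the standard Wall forms `W^g` to exist.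
-/

section HPairs

/-- An `H`-pair: a pair of abelian groups together with a ℤ-bilinear
(i.e. biadditive) map `τ : M₋ × H → M₊`. -/
structure HPair (H : Type) [AddCommGroup H] where
  Neg : Type
  Pos : Type
  [negGrp : AddCommGroup Neg]
  [posGrp : AddCommGroup Pos]
  tau : Neg →+ H →+ Pos

attribute [instance] HPair.negGrp HPair.posGrp

variable {H : Type} [AddCommGroup H]

/-- An `H`-map of `H`-pairs. -/
structure HPairHom (M N : HPair H) where
  neg : M.Neg →+ N.Neg
  pos : M.Pos →+ N.Pos
  comm : ∀ x h, pos (M.tau x h) = N.tau (neg x) h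

/-- An isomorphism of `H`-pairs. -/
structure HPairIso (M N : HPair H) where
  toHom : HPairHom M N
  invHom : HPairHom N M
  left_neg : ∀ x, invHom.neg (toHom.neg x) = x
  right_neg : ∀ x, toHom.neg (invHom.neg x) = x
  left_pos : ∀ y, invHom.pos (toHom.pos y) = y
  right_pos : ∀ y, toHom.pos (invHom.pos y) = y

/-- An `H`-pair is finitely generated if both component groups are. -/
def HPair.FG (M : HPair H) : Prop :=
  AddGroup.FG M.Neg ∧ AddGroup.FG M.Pos

/-- The componentwise direct sum of two `H`-pairs. -/
@[reducible] def HPair.sum (M N : HPair H) : HPair H where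
  Neg := M.Neg × N.Neg
  Pos := M.Pos × N.Pos
  tau :=
    { toFun := fun x => (M.tau x.1).prod (N.tau x.2)
      map_zero' := by
        refine AddMonoidHom.ext fun h => ?_
        simp [Prod.ext_iff]
      map_add' := by
        intro x y
        refine AddMonoidHom.ext fun h => ?_
        simp [Prod.ext_iff] }

/-- The left inclusion `M → M ⊕ N`. -/
def HPairHom.inl (M N : HPair H) : HPairHom M (M.sum N) where
  neg := AddMonoidHom.inl M.Neg N.Neg
  pos := AddMonoidHom.inl M.Pos N.Pos
  comm := by
    intro x h
    simp [HPair.sum, Prod.ext_iff]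

/-- The right inclusion `N → M ⊕ N`. -/
def HPairHom.inr (M N : HPair H) : HPairHom N (M.sum N) where
  neg := AddMonoidHom.inr M.Neg N.Neg
  pos := AddMonoidHom.inr M.Pos N.Pos
  comm := by
    intro x h
    simp [HPair.sum, Prod.ext_iff]

/-- The `H`-pair `P⁰`, with `P⁰₋ = 0`, `P⁰₊ = ℤ` and `τ = 0`. -/
def P0 (H : Type) [AddCommGroup H] : HPair H where
  Neg := PUnit
  Pos := ℤ
  tau := 0

/-- The `H`-pair `P¹`, with `P¹₋ = ℤ`, `P¹₊ = H` and `τ(t, h) = t • h`. -/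
def P1 (H : Type) [AddCommGroup H] : HPair H where
  Neg := ℤ
  Pos := H
  tau := zmultiplesHom (H →+ H) (AddMonoidHom.id H)

/-- The generating-set length `d(H)`: the minimal `k` such that there is a
surjection `ℤ^k → H`. -/
noncomputable def dlen (H : Type) [AddCommGroup H] : ℕ :=
  sInf { k : ℕ | ∃ φ : (Fin k → ℤ) →+ H, Function.Surjective φ }

end HPairs

section WallForms

variable {H : Type} [AddCommGroup H]

/-- A form parameter `(G, ∂, π, ε)` for the category of `H`-pairs.  The two
compatibility identities `bd_eps` and `pi_bd` hold in the geometric setting of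
the paper and are needed for the standard Wall forms to exist. -/
structure FormParameter (H : Type) [AddCommGroup H] where
  G : HPair H
  bd : H →+ G.Pos
  pi : G.Pos →+ H
  eps : ℤ
  eps_pm : eps = 1 ∨ eps = -1
  bd_eps : ∀ h : H, bd (eps • h) = bd h
  pi_bd : ∀ h : H, pi (bd h) = h + eps • h

variable {P : FormParameter H}

/-- A Wall form structure (with parameter `P`) on the `H`-pair `C`. -/
structure WallAux (P : FormParameter H) (C : HPair H) where
  lam : C.Neg →+ C.Pos →+ ℤ
  mu : C.Pos →+ C.Pos →+ H
  alphaNeg : C.Neg →+ P.G.Neg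
  alphaPos : C.Pos → P.G.Pos
  mu_symm : ∀ y y', mu y y' = P.eps • mu y' y
  lam_tau : ∀ x x' h, lam x (C.tau x' h) = 0
  mu_tau : ∀ x h y, mu (C.tau x h) y = lam x y • h
  alphaPos_add : ∀ y y', alphaPos (y + y') = alphaPos y + alphaPos y' + P.bd (mu y y')
  mu_diag : ∀ y, mu y y = P.pi (alphaPos y)
  alphaPos_tau : ∀ x h, alphaPos (C.tau x h) = P.G.tau (alphaNeg x) h

/-- A Wall form with parameter `P`: a finitely generated `H`-pair together
with a Wall form structure. -/
structure WallForm (P : FormParameter H) where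
  carrier : HPair H
  fgNeg : AddGroup.FG carrier.Neg
  fgPos : AddGroup.FG carrier.Pos
  str : WallAux P carrier

/-- The property of an `H`-map to preserve all values of `λ`, `μ`, `α₋`, `α₊`. -/
def IsWallHom {C D : HPair H} (S : WallAux P C) (T : WallAux P D)
    (f : HPairHom C D) : Prop :=
  (∀ x y, T.lam (f.neg x) (f.pos y) = S.lam x y) ∧
  (∀ y y', T.mu (f.pos y) (f.pos y') = S.mu y y') ∧
  (∀ x, T.alphaNeg (f.neg x) = S.alphaNeg x) ∧
  (∀ y, T.alphaPos (f.pos y) = S.alphaPos y)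

/-- A morphism of Wall forms. -/
structure WallHom (M N : WallForm P) where
  hom : HPairHom M.carrier N.carrier
  isWall : IsWallHom M.str N.str hom

/-- An isomorphism of Wall forms: a morphism with a two-sided inverse morphism. -/
structure WallIso (M N : WallForm P) where
  toHom : WallHom M N
  invHom : WallHom N M
  left_neg : ∀ x, invHom.hom.neg (toHom.hom.neg x) = x
  right_neg : ∀ x, toHom.hom.neg (invHom.hom.neg x) = x
  left_pos : ∀ y, invHom.hom.pos (toHom.hom.pos y) = y
  right_pos : ∀ y, toHom.hom.pos (invHom.hom.pos y) = y

end WallForms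
section Extra

variable {H : Type} [AddCommGroup H] {P : FormParameter H}

/-- A subgroup of a finitely generated abelian group is finitely generated. -/
theorem addGroup_fg_subgroup {A : Type} [AddCommGroup A] (hA : AddGroup.FG A)
    (S : AddSubgroup A) : AddGroup.FG S := by
  haveI : Module.Finite ℤ A := Module.Finite.iff_addGroup_fg.mpr hA
  haveI : IsNoetherian ℤ A := isNoetherian_of_isNoetherianRing_of_finite ℤ A
  have h : (AddSubgroup.toIntSubmodule S).FG := IsNoetherian.noetherian _
  have h2 : Module.Finite ℤ (AddSubgroup.toIntSubmodule S) := Module.Finite.iff_fg.mpr h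
  exact Module.Finite.iff_addGroup_fg.mp h2

theorem addGroup_fg_of_module_finite {A : Type} [AddCommGroup A]
    [Module.Finite ℤ A] : AddGroup.FG A :=
  Module.Finite.iff_addGroup_fg.mp inferInstance

end Extra

section StdWall

variable {H : Type} [AddCommGroup H]

/-- The underlying `H`-pair of the standard Wall form of rank `g`:
`W^g₋ = ℤ^g` and `W^g₊ = ℤ^g × H^g`  (the first factor records the
`b`-coordinates, the second the `τ(a_i, -)`-coordinates). -/
@[reducible] def stdPair (H : Type) [AddCommGroup H] (g : ℕ) : HPair H where
  Neg := Fin g → ℤ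
  Pos := (Fin g → ℤ) × (Fin g → H)
  tau :=
    { toFun := fun x =>
        { toFun := fun h => (0, fun i => x i • h)
          map_zero' := by
            refine Prod.ext rfl ?_
            funext i
            simp
          map_add' := by
            intro h h'
            refine Prod.ext (by simp) ?_
            funext i
            simp [smul_add] }
      map_zero' := by
        refine AddMonoidHom.ext fun h => ?_
        refine Prod.ext rfl ?_
        funext i
        simp
      map_add' := by
        intro x x'
        refine AddMonoidHom.ext fun h => ?_
        refine Prod.ext (by simp) ?_
        funext i
        simp [add_smul] }

variable (P : FormParameter H)

/-- The standard Wall form `W^g` of rank `g` with parameter `P`. -/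
def stdWall [AddGroup.FG H] (g : ℕ) : WallForm P where
  carrier := stdPair H g
  fgNeg := by
    have : Module.Finite ℤ (Fin g → ℤ) := inferInstance
    exact addGroup_fg_of_module_finite
  fgPos := by
    haveI : Module.Finite ℤ H := Module.Finite.iff_addGroup_fg.mpr ‹AddGroup.FG H›
    have : Module.Finite ℤ ((Fin g → ℤ) × (Fin g → H)) := inferInstance
    exact addGroup_fg_of_module_finite
  str :=
    { lam :=
        { toFun := fun x =>
            { toFun := fun w => ∑ i, x i * w.1 i
              map_zero' := by simp
              map_add' := by
                intro w w'
                simp [mul_add, Finset.sum_add_distrib] }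
          map_zero' := by
            refine AddMonoidHom.ext fun w => ?_
            show (∑ i, (0 : Fin g → ℤ) i * w.1 i) = 0
            simp
          map_add' := by
            intro x x'
            refine AddMonoidHom.ext fun w => ?_
            simp [add_mul, Finset.sum_add_distrib] }
      mu :=
        { toFun := fun w =>
            { toFun := fun w' => (∑ i, w'.1 i • w.2 i) + P.eps • ∑ i, w.1 i • w'.2 i
              map_zero' := by simp
              map_add' := by
                intro w' w''
                simp only [Prod.fst_add, Prod.snd_add, Pi.add_apply, add_smul, smul_add,
                  Finset.sum_add_distrib]
                abel }
          map_zero' := by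
            refine AddMonoidHom.ext fun w' => ?_
            simp
          map_add' := by
            intro w w'
            refine AddMonoidHom.ext fun w'' => ?_
            simp only [Prod.fst_add, Prod.snd_add, Pi.add_apply, add_smul, smul_add,
              Finset.sum_add_distrib, AddMonoidHom.coe_mk, ZeroHom.coe_mk,
              AddMonoidHom.add_apply]
            abel }
      alphaNeg := 0
      alphaPos := fun w => P.bd (∑ i, w.1 i • w.2 i)
      mu_symm := by
        intro y y'
        have he : P.eps * P.eps = 1 := by
          rcases P.eps_pm with h | h <;> simp [h]
        show (∑ i, y'.1 i • y.2 i) + P.eps • ∑ i, y.1 i • y'.2 i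
            = P.eps • ((∑ i, y.1 i • y'.2 i) + P.eps • ∑ i, y'.1 i • y.2 i)
        rw [smul_add, smul_smul, he, one_smul, add_comm]
      lam_tau := by
        intro x x' h
        show (∑ i, x i * (0 : Fin _ → ℤ) i) = 0
        simp
      mu_tau := by
        intro x h y
        show (∑ i, y.1 i • (fun i => x i • h) i) + P.eps • ∑ i, (0 : Fin _ → ℤ) i • y.2 i
            = (∑ i, x i * y.1 i) • h
        simp only [Pi.zero_apply, zero_smul, Finset.sum_const_zero, smul_zero, add_zero]
        rw [Finset.sum_smul]
        congr 1
        funext i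
        rw [smul_smul, mul_comm]
      alphaPos_add := by
        intro y y'
        show P.bd (∑ i, (y.1 i + y'.1 i) • (y.2 i + y'.2 i))
            = P.bd (∑ i, y.1 i • y.2 i) + P.bd (∑ i, y'.1 i • y'.2 i)
              + P.bd ((∑ i, y'.1 i • y.2 i) + P.eps • ∑ i, y.1 i • y'.2 i)
        have expand : ∀ i : Fin _, (y.1 i + y'.1 i) • (y.2 i + y'.2 i)
            = (y.1 i • y.2 i + y'.1 i • y'.2 i) + (y'.1 i • y.2 i + y.1 i • y'.2 i) := by
          intro i
          rw [add_smul, smul_add, smul_add]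
          abel
        rw [Finset.sum_congr rfl fun i _ => expand i, Finset.sum_add_distrib,
          Finset.sum_add_distrib, Finset.sum_add_distrib, map_add, map_add, map_add, map_add,
          P.bd_eps]
      mu_diag := by
        intro y
        show (∑ i, y.1 i • y.2 i) + P.eps • ∑ i, y.1 i • y.2 i
            = P.pi (P.bd (∑ i, y.1 i • y.2 i))
        rw [P.pi_bd]
      alphaPos_tau := by
        intro x h
        show P.bd (∑ i, (0 : Fin _ → ℤ) i • (fun i => x i • h) i) = P.G.tau ((0 : _ →+ _) x) h
        simp }

variable {P}

/-- The `i`-th standard generator `a_i ∈ W^g₋`. -/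
def stdA [AddGroup.FG H] {g : ℕ} (i : Fin g) : (stdWall P g).carrier.Neg :=
  Pi.single i 1

/-- The `i`-th standard generator `b_i ∈ W^g₊`. -/
def stdB [AddGroup.FG H] {g : ℕ} (i : Fin g) : (stdWall P g).carrier.Pos :=
  (Pi.single i 1, 0)

end StdWall
section SubPairs

variable {H : Type} [AddCommGroup H] {P : FormParameter H}

/-- A sub-`H`-pair of the `H`-pair `C`. -/
structure SubPair (C : HPair H) where
  neg : AddSubgroup C.Neg
  pos : AddSubgroup C.Pos
  tau_mem : ∀ x ∈ neg, ∀ h, C.tau x h ∈ pos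

/-- The componentwise intersection of two sub-`H`-pairs. -/
def SubPair.inf {C : HPair H} (N N' : SubPair C) : SubPair C where
  neg := N.neg ⊓ N'.neg
  pos := N.pos ⊓ N'.pos
  tau_mem := fun x hx h => ⟨N.tau_mem x hx.1 h, N'.tau_mem x hx.2 h⟩

/-- The image of an `H`-map, as a sub-`H`-pair of the codomain. -/
def HPairHom.rangeSub {C D : HPair H} (f : HPairHom C D) : SubPair D where
  neg := f.neg.range
  pos := f.pos.range
  tau_mem := by
    rintro x ⟨a, rfl⟩ h
    exact ⟨C.tau a h, f.comm a h⟩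

/-- The kernel of an `H`-map, as a sub-`H`-pair of the domain. -/
def HPairHom.kerSub {C D : HPair H} (f : HPairHom C D) : SubPair C where
  neg := f.neg.ker
  pos := f.pos.ker
  tau_mem := by
    intro x hx h
    have hx' : f.neg x = 0 := hx
    have h2 : f.pos (C.tau x h) = D.tau (f.neg x) h := f.comm x h
    rw [hx'] at h2
    have h3 : f.pos (C.tau x h) = 0 := by
      rw [h2, map_zero, AddMonoidHom.zero_apply]
    exact h3

/-- The orthogonal complement of a sub-`H`-pair, with respect to a Wall form
structure `S` on the ambient `H`-pair. -/
def SubPair.perp {C : HPair H} (S : WallAux P C) (N : SubPair C) : SubPair C where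
  neg :=
    { carrier := { x | ∀ w ∈ N.pos, S.lam x w = 0 }
      add_mem' := by
        intro a b ha hb w hw
        rw [map_add, AddMonoidHom.add_apply, ha w hw, hb w hw, add_zero]
      zero_mem' := by
        intro w hw
        rw [map_zero, AddMonoidHom.zero_apply]
      neg_mem' := by
        intro a ha w hw
        rw [map_neg, AddMonoidHom.neg_apply, ha w hw, neg_zero] }
  pos :=
    { carrier := { y | (∀ v ∈ N.neg, S.lam v y = 0) ∧ ∀ w ∈ N.pos, S.mu y w = 0 }
      add_mem' := by
        intro a b ha hb
        refine ⟨fun v hv => ?_, fun w hw => ?_⟩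
        · rw [map_add, ha.1 v hv, hb.1 v hv, add_zero]
        · rw [map_add, AddMonoidHom.add_apply, ha.2 w hw, hb.2 w hw, add_zero]
      zero_mem' := by
        refine ⟨fun v hv => ?_, fun w hw => ?_⟩
        · rw [map_zero]
        · rw [map_zero, AddMonoidHom.zero_apply]
      neg_mem' := by
        intro a ha
        refine ⟨fun v hv => ?_, fun w hw => ?_⟩
        · rw [map_neg, ha.1 v hv, neg_zero]
        · rw [map_neg, AddMonoidHom.neg_apply, ha.2 w hw, neg_zero] }
  tau_mem := by
    intro x hx h
    refine ⟨fun v hv => S.lam_tau v x h, fun w hw => ?_⟩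
    rw [S.mu_tau x h w, hx w hw, zero_smul]

/-- Orthogonality of two sub-`H`-pairs with respect to a Wall form structure
`S`: trivial intersection and mutual containment in orthogonal complements. -/
def OrthogonalIn {C : HPair H} (S : WallAux P C) (N N' : SubPair C) : Prop :=
  N.neg ⊓ N'.neg = ⊥ ∧ N.pos ⊓ N'.pos = ⊥ ∧
  N.neg ≤ (N'.perp S).neg ∧ N.pos ≤ (N'.perp S).pos ∧
  N'.neg ≤ (N.perp S).neg ∧ N'.pos ≤ (N.perp S).pos

/-- The underlying `H`-pair of a sub-`H`-pair. -/
@[reducible] def SubPair.toPair {C : HPair H} (N : SubPair C) : HPair H where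
  Neg := N.neg
  Pos := N.pos
  tau :=
    { toFun := fun x =>
        { toFun := fun h => ⟨C.tau x h, N.tau_mem x x.2 h⟩
          map_zero' := by
            apply Subtype.ext
            simp
          map_add' := by
            intro h h'
            apply Subtype.ext
            simp }
      map_zero' := by
        refine AddMonoidHom.ext fun h => ?_
        apply Subtype.ext
        simp
      map_add' := by
        intro x x'
        refine AddMonoidHom.ext fun h => ?_
        apply Subtype.ext
        simp }

/-- The restriction of a Wall form structure to a sub-`H`-pair. -/
def SubPair.restrict {C : HPair H} (S : WallAux P C) (N : SubPair C) :
    WallAux P N.toPair where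
  lam :=
    { toFun := fun x => (S.lam (x : C.Neg)).comp N.pos.subtype
      map_zero' := by
        refine AddMonoidHom.ext fun y => ?_
        simp
      map_add' := by
        intro x x'
        refine AddMonoidHom.ext fun y => ?_
        simp }
  mu :=
    { toFun := fun y => (S.mu (y : C.Pos)).comp N.pos.subtype
      map_zero' := by
        refine AddMonoidHom.ext fun y => ?_
        simp
      map_add' := by
        intro y y'
        refine AddMonoidHom.ext fun y'' => ?_
        simp }
  alphaNeg := S.alphaNeg.comp N.neg.subtype
  alphaPos := fun y => S.alphaPos (y : C.Pos)
  mu_symm := fun y y' => S.mu_symm (y : C.Pos) y'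
  lam_tau := fun x x' h => S.lam_tau (x : C.Neg) x' h
  mu_tau := fun x h y => S.mu_tau (x : C.Neg) h y
  alphaPos_add := fun y y' => S.alphaPos_add (y : C.Pos) y'
  mu_diag := fun y => S.mu_diag (y : C.Pos)
  alphaPos_tau := fun x h => S.alphaPos_tau (x : C.Neg) h

/-- A sub-`H`-pair of (the carrier of) a Wall form is itself a Wall form, via
the restricted structure maps. -/
def SubPair.toWall {M : WallForm P} (N : SubPair M.carrier) : WallForm P where
  carrier := N.toPair
  fgNeg := addGroup_fg_subgroup M.fgNeg N.neg
  fgPos := addGroup_fg_subgroup M.fgPos N.pos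
  str := N.restrict M.str

end SubPairs
section SumAndRank

variable {H : Type} [AddCommGroup H] {P : FormParameter H}

/-- The orthogonal direct sum of two Wall forms. -/
def WallForm.sum (M N : WallForm P) : WallForm P where
  carrier := M.carrier.sum N.carrier
  fgNeg := by
    haveI : Module.Finite ℤ M.carrier.Neg := Module.Finite.iff_addGroup_fg.mpr M.fgNeg
    haveI : Module.Finite ℤ N.carrier.Neg := Module.Finite.iff_addGroup_fg.mpr N.fgNeg
    have : Module.Finite ℤ (M.carrier.Neg × N.carrier.Neg) := inferInstance
    exact Module.Finite.iff_addGroup_fg.mp this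
  fgPos := by
    haveI : Module.Finite ℤ M.carrier.Pos := Module.Finite.iff_addGroup_fg.mpr M.fgPos
    haveI : Module.Finite ℤ N.carrier.Pos := Module.Finite.iff_addGroup_fg.mpr N.fgPos
    have : Module.Finite ℤ (M.carrier.Pos × N.carrier.Pos) := inferInstance
    exact Module.Finite.iff_addGroup_fg.mp this
  str :=
    { lam :=
        { toFun := fun x => (M.str.lam x.1).coprod (N.str.lam x.2)
          map_zero' := by
            refine AddMonoidHom.ext fun y => ?_
            simp
          map_add' := by
            intro x x'
            refine AddMonoidHom.ext fun y => ?_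
            simp
            abel }
      mu :=
        { toFun := fun y => (M.str.mu y.1).coprod (N.str.mu y.2)
          map_zero' := by
            refine AddMonoidHom.ext fun y' => ?_
            simp
          map_add' := by
            intro y y'
            refine AddMonoidHom.ext fun y'' => ?_
            simp
            abel }
      alphaNeg := (M.str.alphaNeg).coprod (N.str.alphaNeg)
      alphaPos := fun y => M.str.alphaPos y.1 + N.str.alphaPos y.2
      mu_symm := by
        intro y y'
        show M.str.mu y.1 y'.1 + N.str.mu y.2 y'.2
            = P.eps • (M.str.mu y'.1 y.1 + N.str.mu y'.2 y.2)
        rw [smul_add, M.str.mu_symm y.1 y'.1, N.str.mu_symm y.2 y'.2]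
      lam_tau := by
        intro x x' h
        show M.str.lam x.1 (M.carrier.tau x'.1 h) + N.str.lam x.2 (N.carrier.tau x'.2 h) = 0
        rw [M.str.lam_tau, N.str.lam_tau, add_zero]
      mu_tau := by
        intro x h y
        show M.str.mu (M.carrier.tau x.1 h) y.1 + N.str.mu (N.carrier.tau x.2 h) y.2
            = (M.str.lam x.1 y.1 + N.str.lam x.2 y.2) • h
        rw [M.str.mu_tau, N.str.mu_tau, add_smul]
      alphaPos_add := by
        intro y y'
        show M.str.alphaPos (y.1 + y'.1) + N.str.alphaPos (y.2 + y'.2)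
            = (M.str.alphaPos y.1 + N.str.alphaPos y.2)
              + (M.str.alphaPos y'.1 + N.str.alphaPos y'.2)
              + P.bd (M.str.mu y.1 y'.1 + N.str.mu y.2 y'.2)
        rw [M.str.alphaPos_add, N.str.alphaPos_add, map_add]
        abel
      mu_diag := by
        intro y
        show M.str.mu y.1 y.1 + N.str.mu y.2 y.2
            = P.pi (M.str.alphaPos y.1 + N.str.alphaPos y.2)
        rw [map_add, M.str.mu_diag, N.str.mu_diag]
      alphaPos_tau := by
        intro x h
        show M.str.alphaPos (M.carrier.tau x.1 h) + N.str.alphaPos (N.carrier.tau x.2 h)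
            = P.G.tau (M.str.alphaNeg x.1 + N.str.alphaNeg x.2) h
        rw [M.str.alphaPos_tau, N.str.alphaPos_tau, map_add, AddMonoidHom.add_apply] }

variable [AddGroup.FG H]

/-- `rankGE M g` expresses the inequality `r(M) ≥ g` for the rank of a Wall
form: there exists a morphism of Wall forms `W^g → M`. -/
def rankGE (M : WallForm P) (g : ℕ) : Prop :=
  Nonempty (WallHom (stdWall P g) M)

/-- `srankGE M g` expresses the inequality `r̄(M) ≥ g` for the stable rank of
a Wall form: `r(M ⊕ W^j) ≥ g + j` for some `j`. -/
def srankGE (M : WallForm P) (g : ℕ) : Prop :=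
  ∃ j : ℕ, rankGE (M.sum (stdWall P j)) (g + j)

end SumAndRank

section Duality

variable {H : Type} [AddCommGroup H] {P : FormParameter H}

/-- The duality map `T⁰ : M₋ → Hom(M, P⁰)` of a Wall form. -/
def dualT0 (M : WallForm P) (v : M.carrier.Neg) : HPairHom M.carrier (P0 H) where
  neg := 0
  pos := M.str.lam v
  comm := by
    intro x h
    show M.str.lam v (M.carrier.tau x h) = ((P0 H).tau 0) h
    rw [M.str.lam_tau]
    show (0 : ℤ) = ((0 : _ →+ (H →+ ℤ)) 0) h
    rfl

/-- The duality map `T¹ : M₊ → Hom(M, P¹)` of a Wall form. -/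
def dualT1 (M : WallForm P) (w : M.carrier.Pos) : HPairHom M.carrier (P1 H) where
  neg := M.str.lam.flip w
  pos := M.str.mu.flip w
  comm := by
    intro x h
    show M.str.mu (M.carrier.tau x h) w = (P1 H).tau (M.str.lam x w) h
    rw [M.str.mu_tau]
    show M.str.lam x w • h = (M.str.lam x w • AddMonoidHom.id H) h
    simp

end Duality

section Statement14Aux

open Module

/-- Dual family lemma: for any linear functional `c` on `ℤ^g` there are `g-1`
vectors in its kernel together with dual functionals (given by vectors `X j`). -/
theorem exists_dual_family {g : ℕ} (c : (Fin g → ℤ) →ₗ[ℤ] ℤ) :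
    ∃ (U : Fin (g - 1) → (Fin g → ℤ)) (X : Fin (g - 1) → (Fin g → ℤ)),
      (∀ j, c (U j) = 0) ∧
      ∀ j k, (∑ i, X j i * U k i) = if j = k then 1 else 0 := by
  classical
  haveI : IsNoetherian ℤ (Fin g → ℤ) := isNoetherian_of_isNoetherianRing_of_finite ℤ _
  set K := LinearMap.ker c with hKdef
  haveI : Module.Finite ℤ K := Module.Finite.iff_fg.mpr (IsNoetherian.noetherian K)
  haveI : Module.Finite ℤ (LinearMap.range c) :=
    Module.Finite.iff_fg.mpr (IsNoetherian.noetherian _)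
  obtain ⟨s, hs⟩ := LinearMap.exists_rightInverse_of_surjective c.rangeRestrict
    (LinearMap.range_rangeRestrict c)
  have hcs : ∀ y : LinearMap.range c, c (s y) = (y : ℤ) := by
    intro y
    have h1 : c.rangeRestrict (s y) = y := LinearMap.ext_iff.mp hs y
    exact congrArg Subtype.val h1
  let p0 : (Fin g → ℤ) →ₗ[ℤ] (Fin g → ℤ) := LinearMap.id - s ∘ₗ c.rangeRestrict
  have hp0K : ∀ x, p0 x ∈ K := by
    intro x
    have : c (p0 x) = 0 := by
      have : p0 x = x - s (c.rangeRestrict x) := rfl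
      rw [this, map_sub, hcs]
      simp [LinearMap.rangeRestrict]
    exact LinearMap.mem_ker.mpr this
  let p : (Fin g → ℤ) →ₗ[ℤ] K := p0.codRestrict K hp0K
  have hpk : ∀ x : K, p (x : Fin g → ℤ) = x := by
    intro x
    refine Subtype.ext ?_
    have h0 : c.rangeRestrict (x : Fin g → ℤ) = 0 := by
      refine Subtype.ext ?_
      simpa using (LinearMap.mem_ker.mp x.2)
    show p0 (x : Fin g → ℤ) = (x : Fin g → ℤ)
    show (x : Fin g → ℤ) - s (c.rangeRestrict (x : Fin g → ℤ)) = (x : Fin g → ℤ)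
    rw [h0, map_zero, sub_zero]
  -- the splitting gives an equivalence with `K × range c`
  let fw : (Fin g → ℤ) →ₗ[ℤ] K × LinearMap.range c := p.prod c.rangeRestrict
  let bw : (K × LinearMap.range c) →ₗ[ℤ] (Fin g → ℤ) :=
    K.subtype ∘ₗ LinearMap.fst ℤ _ _ + s ∘ₗ LinearMap.snd ℤ _ _
  have hps : ∀ y : LinearMap.range c, p (s y) = 0 := by
    intro y
    refine Subtype.ext ?_
    show s y - s (c.rangeRestrict (s y)) = 0
    have h3 : c.rangeRestrict (s y) = y := LinearMap.ext_iff.mp hs y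
    rw [h3, sub_self]
  have hfb : fw ∘ₗ bw = LinearMap.id := by
    apply LinearMap.ext
    rintro ⟨x, y⟩
    have hb : bw (x, y) = (x : Fin g → ℤ) + s y := rfl
    refine Prod.ext ?_ ?_
    · show p (bw (x, y)) = x
      rw [hb, map_add, hpk, hps, add_zero]
    · show c.rangeRestrict (bw (x, y)) = y
      refine Subtype.ext ?_
      show c ((x : Fin g → ℤ) + s y) = (y : ℤ)
      rw [map_add, LinearMap.mem_ker.mp x.2, hcs, zero_add]
  have hbf : bw ∘ₗ fw = LinearMap.id := by
    apply LinearMap.ext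
    intro x
    show (p x : Fin g → ℤ) + s (c.rangeRestrict x) = x
    show (x - s (c.rangeRestrict x)) + s (c.rangeRestrict x) = x
    abel
  let e : (Fin g → ℤ) ≃ₗ[ℤ] K × LinearMap.range c := LinearEquiv.ofLinear fw bw hfb hbf
  have hrank : finrank ℤ K + finrank ℤ (LinearMap.range c) = g := by
    have h1 := e.finrank_eq
    rw [Module.finrank_prod, Module.finrank_fin_fun] at h1
    omega
  have hle : g - 1 ≤ finrank ℤ K := by
    have h2 : finrank ℤ (LinearMap.range c) ≤ 1 := by
      simpa using (LinearMap.range c).finrank_le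
    omega
  let b := Module.Free.chooseBasis ℤ K
  obtain ⟨em⟩ : Nonempty (Fin (g - 1) ↪ Module.Free.ChooseBasisIndex ℤ K) := by
    apply Function.Embedding.nonempty_of_card_le
    rw [Fintype.card_fin, ← Module.finrank_eq_card_chooseBasisIndex]
    exact hle
  let L : Fin (g - 1) → ((Fin g → ℤ) →ₗ[ℤ] ℤ) := fun j => (b.coord (em j)) ∘ₗ p
  refine ⟨fun j => ((b (em j) : K) : Fin g → ℤ),
    fun j i => L j (fun k => if i = k then 1 else 0), fun j => ?_, fun j k => ?_⟩
  · exact LinearMap.mem_ker.mp (b (em j)).2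
  · have h1 : ∑ i, L j (fun k => if i = k then 1 else 0) * ((b (em k) : K) : Fin g → ℤ) i
        = L j ((b (em k) : K) : Fin g → ℤ) := by
      rw [LinearMap.pi_apply_eq_sum_univ (L j)]
      refine Finset.sum_congr rfl fun i _ => ?_
      rw [smul_eq_mul, mul_comm]
    rw [h1]
    show b.coord (em j) (p ((b (em k) : K) : Fin g → ℤ)) = _
    rw [hpk]
    rw [Basis.coord_apply, b.repr_self, Finsupp.single_apply]
    by_cases h : j = k
    · subst h; simp
    · have : ¬ (em k = em j) := fun hek => h (em.injective hek).symm
      simp [h, this]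

end Statement14Aux

section Statement14

variable {H : Type} [AddCommGroup H] {P : FormParameter H}

theorem WallAux.alphaPos_zero {C : HPair H} (S : WallAux P C) : S.alphaPos 0 = 0 := by
  have h := S.alphaPos_add 0 0
  simp only [add_zero, map_zero, AddMonoidHom.zero_apply] at h
  exact (left_eq_add.mp h)

/-- Composition of `H`-maps. -/
def HPairHom.comp {A B C : HPair H} (g : HPairHom B C) (f : HPairHom A B) :
    HPairHom A C where
  neg := g.neg.comp f.neg
  pos := g.pos.comp f.pos
  comm := fun x h => by
    show g.pos (f.pos (A.tau x h)) = C.tau (g.neg (f.neg x)) h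
    rw [f.comm, g.comm]

/-- Composition of morphisms of Wall forms. -/
def WallHom.comp {A B C : WallForm P} (g : WallHom B C) (f : WallHom A B) :
    WallHom A C where
  hom := g.hom.comp f.hom
  isWall := by
    obtain ⟨gl, gm, gn, gp⟩ := g.isWall
    obtain ⟨fl, fm, fn, fp⟩ := f.isWall
    refine ⟨fun x y => ?_, fun y y' => ?_, fun x => ?_, fun y => ?_⟩
    · show C.str.lam (g.hom.neg (f.hom.neg x)) (g.hom.pos (f.hom.pos y)) = _
      rw [gl, fl]
    · show C.str.mu (g.hom.pos (f.hom.pos y)) (g.hom.pos (f.hom.pos y')) = _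
      rw [gm, fm]
    · show C.str.alphaNeg (g.hom.neg (f.hom.neg x)) = _
      rw [gn, fn]
    · show C.str.alphaPos (g.hom.pos (f.hom.pos y)) = _
      rw [gp, fp]

/-- Every Wall form has rank at least `0`. -/
theorem rankGE_zero [AddGroup.FG H] (N : WallForm P) : rankGE N 0 := by
  refine ⟨⟨⟨0, 0, fun x h => ?_⟩, fun x y => ?_, fun y y' => ?_, fun x => ?_, fun y => ?_⟩⟩
  · simp
  · show N.str.lam 0 0 = ∑ i : Fin 0, x i * y.1 i
    simp
  · show N.str.mu 0 0 = (∑ i : Fin 0, y'.1 i • y.2 i) + P.eps • ∑ i : Fin 0, y.1 i • y'.2 i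
    simp
  · show N.str.alphaNeg 0 = (0 : _ →+ _) x
    simp
  · show N.str.alphaPos 0 = P.bd (∑ i : Fin 0, y.1 i • y.2 i)
    rw [N.str.alphaPos_zero]
    simp

/-- Corestriction of a Wall morphism to the kernel of an `H`-map to `P⁰`. -/
def WallHom.intoKer [AddGroup.FG H] {M : WallForm P} (φ : HPairHom M.carrier (P0 H))
    {N : WallForm P} (ρ : WallHom N M) (h : ∀ y, φ.pos (ρ.hom.pos y) = 0) :
    WallHom N (SubPair.toWall (φ.kerSub)) where
  hom :=
    { neg :=
        { toFun := fun x => ⟨ρ.hom.neg x, by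
            have : Subsingleton (P0 H).Neg := ⟨fun a b => rfl⟩
            exact AddMonoidHom.mem_ker.mpr (Subsingleton.elim _ _)⟩
          map_zero' := Subtype.ext (map_zero ρ.hom.neg)
          map_add' := fun a b => Subtype.ext (map_add ρ.hom.neg a b) }
      pos :=
        { toFun := fun y => ⟨ρ.hom.pos y, AddMonoidHom.mem_ker.mpr (h y)⟩
          map_zero' := Subtype.ext (map_zero ρ.hom.pos)
          map_add' := fun a b => Subtype.ext (map_add ρ.hom.pos a b) }
      comm := fun x h' => Subtype.ext (ρ.hom.comm x h') }
  isWall := ⟨ρ.isWall.1, ρ.isWall.2.1, ρ.isWall.2.2.1, ρ.isWall.2.2.2⟩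

/-- Corestriction, into a kernel summed with a standard Wall form. -/
def WallHom.intoKerSum [AddGroup.FG H] {M : WallForm P} (φ : HPairHom M.carrier (P0 H))
    {N W : WallForm P} (ρ : WallHom N (M.sum W))
    (h : ∀ y, φ.pos (ρ.hom.pos y).1 = 0) :
    WallHom N ((SubPair.toWall (φ.kerSub)).sum W) where
  hom :=
    { neg :=
        { toFun := fun x => (⟨(ρ.hom.neg x).1, by
            have : Subsingleton (P0 H).Neg := ⟨fun a b => rfl⟩
            exact AddMonoidHom.mem_ker.mpr (Subsingleton.elim _ _)⟩, (ρ.hom.neg x).2)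
          map_zero' := by
            refine Prod.ext (Subtype.ext ?_) ?_
            · show (ρ.hom.neg 0).1 = 0
              rw [map_zero]
              rfl
            · show (ρ.hom.neg 0).2 = 0
              rw [map_zero]
              rfl
          map_add' := fun a b => by
            refine Prod.ext (Subtype.ext ?_) ?_
            · show (ρ.hom.neg (a + b)).1 = (ρ.hom.neg a).1 + (ρ.hom.neg b).1
              rw [map_add]
              rfl
            · show (ρ.hom.neg (a + b)).2 = (ρ.hom.neg a).2 + (ρ.hom.neg b).2
              rw [map_add]
              rfl }
      pos :=
        { toFun := fun y => (⟨(ρ.hom.pos y).1, AddMonoidHom.mem_ker.mpr (h y)⟩,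
            (ρ.hom.pos y).2)
          map_zero' := by
            refine Prod.ext (Subtype.ext ?_) ?_
            · show (ρ.hom.pos 0).1 = 0
              rw [map_zero]
              rfl
            · show (ρ.hom.pos 0).2 = 0
              rw [map_zero]
              rfl
          map_add' := fun a b => by
            refine Prod.ext (Subtype.ext ?_) ?_
            · show (ρ.hom.pos (a + b)).1 = (ρ.hom.pos a).1 + (ρ.hom.pos b).1
              rw [map_add]
              rfl
            · show (ρ.hom.pos (a + b)).2 = (ρ.hom.pos a).2 + (ρ.hom.pos b).2
              rw [map_add]
              rfl }
      comm := fun x h' => by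
        refine Prod.ext (Subtype.ext ?_) ?_
        · show (ρ.hom.pos (N.carrier.tau x h')).1 = M.carrier.tau (ρ.hom.neg x).1 h'
          exact congrArg Prod.fst (ρ.hom.comm x h')
        · show (ρ.hom.pos (N.carrier.tau x h')).2 = W.carrier.tau (ρ.hom.neg x).2 h'
          exact congrArg Prod.snd (ρ.hom.comm x h') }
  isWall := ⟨ρ.isWall.1, ρ.isWall.2.1, ρ.isWall.2.2.1, ρ.isWall.2.2.2⟩

/-- The kernel of an `H`-map `W^g → P⁰` contains a standard Wall form of
rank `g - 1`. -/
theorem ker_std [AddGroup.FG H] {g : ℕ}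
    (ψ : HPairHom (stdWall P g).carrier (P0 H)) :
    ∃ ι : WallHom (stdWall P (g - 1)) (stdWall P g),
      ∀ y, ψ.pos (ι.hom.pos y) = 0 := by
  classical
  let cAdd : (Fin g → ℤ) →+ ℤ :=
    { toFun := fun u => ψ.pos (u, 0)
      map_zero' := by
        show ψ.pos ((0 : Fin g → ℤ), (0 : Fin g → H)) = 0
        exact map_zero ψ.pos
      map_add' := fun u v => by
        show ψ.pos ((u + v : Fin g → ℤ), (0 : Fin g → H))
          = ψ.pos (u, 0) + ψ.pos (v, 0)
        have h1 : ((u + v : Fin g → ℤ), (0 : Fin g → H)) = (u, 0) + (v, 0) := by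
          refine Prod.ext rfl ?_
          simp
        rw [h1]
        exact map_add ψ.pos _ _ }
  let clin : (Fin g → ℤ) →ₗ[ℤ] ℤ := cAdd.toIntLinearMap
  obtain ⟨U, X, hU, hd⟩ := exists_dual_family clin
  have key_mul : ∀ (x u : Fin (g - 1) → ℤ),
      ∑ i, (∑ j, x j * X j i) * (∑ k, u k * U k i) = ∑ j, x j * u j := by
    intro x u
    have h1 : ∀ i, (∑ j, x j * X j i) * (∑ k, u k * U k i)
        = ∑ j, ∑ k, x j * u k * (X j i * U k i) := by
      intro i
      rw [Finset.sum_mul]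
      refine Finset.sum_congr rfl fun j _ => ?_
      rw [Finset.mul_sum]
      refine Finset.sum_congr rfl fun k _ => ?_
      ring
    rw [Finset.sum_congr rfl fun i _ => h1 i, Finset.sum_comm]
    refine Finset.sum_congr rfl fun j _ => ?_
    rw [Finset.sum_comm]
    calc ∑ k, ∑ i, x j * u k * (X j i * U k i)
        = ∑ k, x j * u k * (if j = k then 1 else 0) := by
          refine Finset.sum_congr rfl fun k _ => ?_
          rw [← Finset.mul_sum, hd j k]
      _ = x j * u j := by simp
  have key_smul : ∀ (u : Fin (g - 1) → ℤ) (v : Fin (g - 1) → H),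
      ∑ i, (∑ k, u k * U k i) • (∑ j, X j i • v j) = ∑ j, u j • v j := by
    intro u v
    have h1 : ∀ i, (∑ k, u k * U k i) • (∑ j, X j i • v j)
        = ∑ j, (∑ k, u k * (X j i * U k i)) • v j := by
      intro i
      rw [Finset.smul_sum]
      refine Finset.sum_congr rfl fun j _ => ?_
      rw [smul_smul]
      congr 1
      rw [Finset.sum_mul]
      refine Finset.sum_congr rfl fun k _ => ?_
      ring
    rw [Finset.sum_congr rfl fun i _ => h1 i, Finset.sum_comm]
    refine Finset.sum_congr rfl fun j _ => ?_
    rw [← Finset.sum_smul]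
    congr 1
    rw [Finset.sum_comm]
    calc ∑ k, ∑ i, u k * (X j i * U k i)
        = ∑ k, u k * (if j = k then 1 else 0) := by
          refine Finset.sum_congr rfl fun k _ => ?_
          rw [← Finset.mul_sum, hd j k]
      _ = u j := by simp
  let negmap : (Fin (g - 1) → ℤ) →+ (Fin g → ℤ) :=
    { toFun := fun x i => ∑ j, x j * X j i
      map_zero' := by
        funext i
        simp
      map_add' := fun x y => by
        funext i
        simp [add_mul, Finset.sum_add_distrib] }
  let posmap : ((Fin (g - 1) → ℤ) × (Fin (g - 1) → H)) →+
      ((Fin g → ℤ) × (Fin g → H)) :=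
    { toFun := fun w => (fun i => ∑ j, w.1 j * U j i, fun i => ∑ j, X j i • w.2 j)
      map_zero' := by
        refine Prod.ext ?_ ?_ <;> funext i <;> simp
      map_add' := fun w w' => by
        refine Prod.ext ?_ ?_ <;> funext i <;>
          simp [add_mul, smul_add, Finset.sum_add_distrib] }
  have hcomm : ∀ x h, posmap ((stdWall P (g - 1)).carrier.tau x h)
      = (stdWall P g).carrier.tau (negmap x) h := by
    intro x h
    show ((fun i => ∑ j, (0 : Fin (g-1) → ℤ) j * U j i, fun i => ∑ j, X j i • (x j • h)) :
        (Fin g → ℤ) × (Fin g → H))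
      = (0, fun i => (∑ j, x j * X j i) • h)
    refine Prod.ext ?_ ?_
    · funext i
      simp
    · funext i
      show ∑ j, X j i • (x j • h) = (∑ j, x j * X j i) • h
      rw [Finset.sum_smul]
      refine Finset.sum_congr rfl fun j _ => ?_
      rw [smul_smul, mul_comm]
  refine ⟨⟨⟨negmap, posmap, hcomm⟩, fun x y => ?_, fun y y' => ?_, fun x => ?_,
      fun y => ?_⟩, ?_⟩
  · show ∑ i, (∑ j, x j * X j i) * (∑ k, y.1 k * U k i) = ∑ j, x j * y.1 j
    exact key_mul x y.1
  · show (∑ i, (∑ k, y'.1 k * U k i) • (∑ j, X j i • y.2 j))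
        + P.eps • ∑ i, (∑ k, y.1 k * U k i) • (∑ j, X j i • y'.2 j)
      = (∑ j, y'.1 j • y.2 j) + P.eps • ∑ j, y.1 j • y'.2 j
    rw [key_smul, key_smul]
  · show (0 : _ →+ P.G.Neg) (negmap x) = (0 : _ →+ P.G.Neg) x
    simp
  · show P.bd (∑ i, (∑ k, y.1 k * U k i) • (∑ j, X j i • y.2 j))
      = P.bd (∑ j, y.1 j • y.2 j)
    rw [key_smul]
  · intro y
    show ψ.pos (posmap y) = 0
    have hrew : posmap y
        = (∑ j, y.1 j • ((U j, 0) : (Fin g → ℤ) × (Fin g → H)))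
          + ∑ j, (((0 : Fin g → ℤ), fun i => X j i • y.2 j) :
              (Fin g → ℤ) × (Fin g → H)) := by
      refine Prod.ext ?_ ?_
      · show (fun i => ∑ j, y.1 j * U j i) = _
        simp only [Prod.fst_add, Prod.fst_sum]
        funext i
        simp [Finset.sum_apply, Prod.smul_fst, Pi.smul_apply, smul_eq_mul]
      · show (fun i => ∑ j, X j i • y.2 j) = _
        simp only [Prod.snd_add, Prod.snd_sum]
        funext i
        simp [Finset.sum_apply, Prod.smul_snd, Pi.smul_apply]
    rw [hrew]
    erw [map_add, map_sum, map_sum]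
    have h1 : ∀ j ∈ Finset.univ,
        ψ.pos (y.1 j • ((U j, 0) : (Fin g → ℤ) × (Fin g → H))) = 0 := by
      intro j _
      rw [show ψ.pos (y.1 j • ((U j, 0) : (Fin g → ℤ) × (Fin g → H)))
          = y.1 j • ψ.pos ((U j, 0) : (Fin g → ℤ) × (Fin g → H)) from map_zsmul ψ.pos _ _]
      have h2 : ψ.pos ((U j, 0) : (Fin g → ℤ) × (Fin g → H)) = clin (U j) := rfl
      rw [h2, hU j]
      exact smul_zero _
    have h2 : ∀ j ∈ Finset.univ,
        ψ.pos ((((0 : Fin g → ℤ), fun i => X j i • y.2 j) :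
          (Fin g → ℤ) × (Fin g → H))) = 0 := by
      intro j _
      have h3 : (((0 : Fin g → ℤ), fun i => X j i • y.2 j) :
          (Fin g → ℤ) × (Fin g → H)) = (stdWall P g).carrier.tau (X j) (y.2 j) := rfl
      rw [h3]
      exact (ψ.comm _ _).trans rfl
    rw [Finset.sum_eq_zero h1, Finset.sum_eq_zero h2, add_zero]

end Statement14
/-- If `r(M) ≥ g` and `φ : M → P⁰` is an `H`-map, then
`r(ker φ) ≥ g - 1`; similarly for the stable rank. -/
theorem statement_14 {H : Type} [AddCommGroup H] [AddGroup.FG H]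
    (P : FormParameter H) (M : WallForm P) (g : ℕ)
    (φ : HPairHom M.carrier (P0 H)) :
    (rankGE M g → rankGE φ.kerSub.toWall (g - 1)) ∧
    (srankGE M g → srankGE φ.kerSub.toWall (g - 1)) := by
  constructor
  · rintro ⟨f⟩
    obtain ⟨ι, hι⟩ := ker_std (P := P) (HPairHom.comp φ f.hom)
    exact ⟨WallHom.intoKer φ (f.comp ι) (fun y => hι y)⟩
  · rintro ⟨j, ⟨f⟩⟩
    rcases Nat.eq_zero_or_pos g with hg | hg
    · subst hg
      exact ⟨0, rankGE_zero _⟩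
    · let φ' : HPairHom (M.sum (stdWall P j)).carrier (P0 H) :=
        { neg := 0
          pos := φ.pos.comp (AddMonoidHom.fst _ _)
          comm := fun x h => by
            show φ.pos (M.carrier.tau x.1 h) = _
            rw [φ.comm]
            rfl }
      obtain ⟨ι, hι⟩ := ker_std (P := P) (HPairHom.comp φ' f.hom)
      have hgj : g + j - 1 = g - 1 + j := by omega
      have main := WallHom.intoKerSum φ (f.comp ι) (fun y => hι y)
      exact ⟨j, ⟨hgj ▸ main⟩⟩
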